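/- Let f : ℝ^d → ℝ be convex differentiable with minimizer x⋆, let α : [0,∞) → [0,∞) be continuous, and let X be a differentiable solution of the non-autonomous gradient flow X'(t) = -α(t) ∇f(X t) with X 0 = x₀. Define A(t) = ∫₀ᵗ α(s) ds. Then V(t) = A(t)(f(X t) - f(x⋆)) + (1/2)‖X t - x⋆‖² is nonincreasing, and hence f(X t) - f(x⋆) ≤ ‖x₀ - x⋆‖²/(2 A(t)) whenever A(t) > 0. -/

import Mathlib

open scoped RealInnerProductSpace
open Real Set

theorem nonautonomous_gradient_flow_convex_rate
    (d : ℕ) (f : EuclideanSpace ℝ (Fin d) → ℝ) (hf : Differentiable ℝ f)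
    (hconv : ∀ x y, f y ≥ f x + ⟪gradient f x, y - x⟫)
    (xstar : EuclideanSpace ℝ (Fin d)) (hmin : ∀ y, f xstar ≤ f y)
    (α : ℝ → ℝ) (hαc : ContinuousOn α (Set.Ici 0))
    (hαnn : ∀ t ≥ (0 : ℝ), 0 ≤ α t)
    (x₀ : EuclideanSpace ℝ (Fin d))
    (X : ℝ → EuclideanSpace ℝ (Fin d)) (hX0 : X 0 = x₀)
    (hX : ∀ t ≥ (0 : ℝ), HasDerivAt X (-((α t) • gradient f (X t))) t)
    (V : ℝ → ℝ)
    (hV : ∀ t, V t = (∫ s in (0 : ℝ)..t, α s) * (f (X t) - f xstar)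
        + (1 / 2) * ‖X t - xstar‖ ^ 2) :
    AntitoneOn V (Set.Ici (0 : ℝ)) ∧
      ∀ t ≥ (0 : ℝ), 0 < (∫ s in (0 : ℝ)..t, α s) →
        f (X t) - f xstar ≤ ‖x₀ - xstar‖ ^ 2 / (2 * ∫ s in (0 : ℝ)..t, α s) := by
  set A : ℝ → ℝ := fun t => ∫ s in (0 : ℝ)..t, α s with hA
  -- extended α
  set β : ℝ → ℝ := fun s => α (max s 0) with hβdef
  have hβc : Continuous β :=
    hαc.comp_continuous (continuous_id.max continuous_const) fun s => Set.mem_Ici.2 (le_max_right _ _)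
  set B : ℝ → ℝ := fun t => ∫ s in (0 : ℝ)..t, β s with hBdef
  have hAB : ∀ t ≥ (0 : ℝ), A t = B t := by
    intro t ht
    refine intervalIntegral.integral_congr fun s hs => ?_
    rw [Set.uIcc_of_le ht] at hs
    simp [hβdef, max_eq_left hs.1]
  have hBderiv : ∀ t : ℝ, HasDerivAt B (β t) t := fun t =>
    (hβc.integral_hasStrictDerivAt 0 t).hasDerivAt
  -- X continuous on Ici 0 etc.
  have hXc : ∀ t ≥ (0 : ℝ), ContinuousAt X t := fun t ht => (hX t ht).continuousAt
  -- derivative of V at interior points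
  have hVd : ∀ t > (0 : ℝ), HasDerivAt V
      (α t * (f (X t) - f xstar) + A t * ⟪gradient f (X t), -((α t) • gradient f (X t))⟫
        + ⟪X t - xstar, -((α t) • gradient f (X t))⟫) t := by
    intro t ht
    have hmem : Set.Ici (0 : ℝ) ∈ nhds t := Ici_mem_nhds ht
    have hAd : HasDerivAt A (α t) t := by
      have : HasDerivAt B (α t) t := by
        have := hBderiv t
        rwa [show β t = α t by simp [hβdef, max_eq_left ht.le]] at this
      refine this.congr_of_eventuallyEq ?_
      filter_upwards [hmem] with s hs using (hAB s hs)
    have hXd := hX t ht.le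
    have hfXd : HasDerivAt (fun s => f (X s)) (⟪gradient f (X t), -((α t) • gradient f (X t))⟫) t := by
      have h1 : HasFDerivAt f (InnerProductSpace.toDual ℝ _ (gradient f (X t))) (X t) :=
        (hf (X t)).hasGradientAt.hasFDerivAt
      have h2 := h1.comp_hasDerivAt t hXd
      rw [InnerProductSpace.toDual_apply_apply] at h2
      exact h2
    have hsq : HasDerivAt (fun s => ⟪X s - xstar, X s - xstar⟫)
        (⟪X t - xstar, -((α t) • gradient f (X t))⟫
          + ⟪-((α t) • gradient f (X t)), X t - xstar⟫) t := by
      have hsub : HasDerivAt (fun s => X s - xstar) (-((α t) • gradient f (X t))) t :=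
        hXd.sub_const _
      exact hsub.inner ℝ hsub
    have hV' : HasDerivAt (fun s => A s * (f (X s) - f xstar)
          + (1 / 2) * ⟪X s - xstar, X s - xstar⟫)
        (α t * (f (X t) - f xstar) + A t * ⟪gradient f (X t), -((α t) • gradient f (X t))⟫
          + (1 / 2) * (⟪X t - xstar, -((α t) • gradient f (X t))⟫
            + ⟪-((α t) • gradient f (X t)), X t - xstar⟫)) t := by
      exact (hAd.mul (hfXd.sub_const _)).add (hsq.const_mul _)
    have heq : (fun s => A s * (f (X s) - f xstar)
          + (1 / 2) * ⟪X s - xstar, X s - xstar⟫) = V := by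
      funext s
      rw [hV s, real_inner_self_eq_norm_sq]
    rw [heq] at hV'
    have : (1 / 2 : ℝ) * (⟪X t - xstar, -((α t) • gradient f (X t))⟫
        + ⟪-((α t) • gradient f (X t)), X t - xstar⟫)
        = ⟪X t - xstar, -((α t) • gradient f (X t))⟫ := by
      rw [real_inner_comm (-((α t) • gradient f (X t)))]; ring
    rw [this] at hV'
    exact hV'
  -- the derivative is nonpositive
  have hVd_nonpos : ∀ t > (0 : ℝ),
      α t * (f (X t) - f xstar) + A t * ⟪gradient f (X t), -((α t) • gradient f (X t))⟫
        + ⟪X t - xstar, -((α t) • gradient f (X t))⟫ ≤ 0 := by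
    intro t ht
    have hαt := hαnn t ht.le
    have hAt : 0 ≤ A t := by
      rw [hA]
      apply intervalIntegral.integral_nonneg ht.le
      intro s hs; exact hαnn s hs.1
    have hconv' := hconv (X t) xstar
    have hinner : f (X t) - f xstar ≤ ⟪gradient f (X t), X t - xstar⟫ := by
      have : ⟪gradient f (X t), xstar - X t⟫ = -⟪gradient f (X t), X t - xstar⟫ := by
        rw [← inner_neg_right]; congr 1; abel
      linarith [hconv', this ▸ hconv']
    have e1 : ⟪gradient f (X t), -((α t) • gradient f (X t))⟫
        = -(α t * ‖gradient f (X t)‖ ^ 2) := by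
      rw [inner_neg_right, real_inner_smul_right, real_inner_self_eq_norm_sq]
    have e2 : ⟪X t - xstar, -((α t) • gradient f (X t))⟫
        = -(α t * ⟪gradient f (X t), X t - xstar⟫) := by
      rw [inner_neg_right, real_inner_smul_right, real_inner_comm]
    rw [e1, e2]
    have h1 : α t * (f (X t) - f xstar) ≤ α t * ⟪gradient f (X t), X t - xstar⟫ :=
      mul_le_mul_of_nonneg_left hinner hαt
    nlinarith [sq_nonneg ‖gradient f (X t)‖, mul_nonneg hAt (mul_nonneg hαt (sq_nonneg ‖gradient f (X t)‖))]
  -- continuity of V on Ici 0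
  have hVc : ContinuousOn V (Set.Ici 0) := by
    have hXcon : ContinuousOn X (Set.Ici 0) := fun t ht => (hXc t ht).continuousWithinAt
    have hAcon : ContinuousOn A (Set.Ici 0) := by
      have : ContinuousOn B (Set.Ici 0) := fun t _ => (hBderiv t).continuousAt.continuousWithinAt
      exact this.congr hAB
    have : ContinuousOn (fun t => A t * (f (X t) - f xstar) + (1 / 2) * ‖X t - xstar‖ ^ 2)
        (Set.Ici 0) := by
      exact (hAcon.mul ((hf.continuous.comp_continuousOn hXcon).sub continuousOn_const)).add
        (continuousOn_const.mul (((hXcon.sub continuousOn_const).norm).pow 2))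
    exact this.congr fun t _ => (hV t)
  have hanti : AntitoneOn V (Set.Ici (0 : ℝ)) := by
    apply antitoneOn_of_deriv_nonpos (convex_Ici 0) hVc
    · intro t ht
      rw [interior_Ici] at ht
      exact (hVd t ht).differentiableAt.differentiableWithinAt
    · intro t ht
      rw [interior_Ici] at ht
      rw [(hVd t ht).deriv]
      exact hVd_nonpos t ht
  refine ⟨hanti, ?_⟩
  intro t ht hApos
  have hVle : V t ≤ V 0 := hanti (by exact Set.self_mem_Ici) ht ht
  have hV0 : V 0 = (1 / 2) * ‖x₀ - xstar‖ ^ 2 := by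
    rw [hV 0, hX0]; simp [hA]
  have hVt : A t * (f (X t) - f xstar) ≤ V t := by
    rw [hV t]
    nlinarith [sq_nonneg ‖X t - xstar‖]
  rw [hV0] at hVle
  have hkey : A t * (f (X t) - f xstar) ≤ (1 / 2) * ‖x₀ - xstar‖ ^ 2 := hVt.trans hVle
  rw [le_div_iff₀ (by linarith : (0:ℝ) < 2 * A t)]
  nlinarith
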